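/- Let (X_i) be i.i.d. real-valued integrable random variables with E[X_1] = 0 and P(X_1 = 0) < 1, and let S_n = X_1 + ⋯ + X_n. Then almost surely liminf S_n = −∞ and limsup S_n = +∞; in particular, almost surely S_n < 0 for infinitely many n. -/

import Mathlib

open MeasureTheory ProbabilityTheory Filter

section RandomWalkOscillationAux

open Set Topology

set_option linter.unusedSectionVars false

variable {Ω : Type*} [MeasureSpace Ω] [IsProbabilityMeasure (ℙ : Measure Ω)]

lemma ereal_coe_add_iSup (x : ℝ) (f : ℕ → EReal) :
    (x : EReal) + ⨆ n, f n = ⨆ n, ((x : EReal) + f n) := by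
  refine le_antisymm ?_ (iSup_le fun n => add_le_add (le_refl _) (le_iSup f n))
  rw [add_comm, ← EReal.le_sub_iff_add_le (.inl (EReal.coe_ne_bot x))
    (.inl (EReal.coe_ne_top x))]
  refine iSup_le fun n => ?_
  rw [EReal.le_sub_iff_add_le (.inl (EReal.coe_ne_bot x)) (.inl (EReal.coe_ne_top x)),
    add_comm]
  exact le_iSup (fun n => (x : EReal) + f n) n

lemma esup_succ (u : ℕ → EReal) : ⨆ n, u n = max (u 0) (⨆ n, u (n + 1)) := by
  refine le_antisymm (iSup_le fun n => ?_)
    (max_le (le_iSup u 0) (iSup_le fun n => le_iSup u (n + 1)))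
  cases n with
  | zero => exact le_max_left _ _
  | succ m => exact le_trans (le_iSup (fun n => u (n + 1)) m) (le_max_right _ _)

lemma phi_lip (c a b : ℝ) : |min (max a 0) c - min (max b 0) c| ≤ |a - b| := by
  refine (abs_min_sub_min_le_max _ _ _ _).trans (max_le (abs_max_sub_max_le_abs a b 0) ?_)
  simp [abs_nonneg]

lemma vec_law (X : ℕ → Ω → ℝ) (hmeas : ∀ i, Measurable (X i))
    (hindep : iIndepFun X ℙ)
    (hident : ∀ i, IdentDistrib (X i) (X 0) ℙ ℙ)
    (g : ℕ → ℕ) (hg : Function.Injective g) (s : Finset ℕ) :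
    Measure.map (fun ω (i : s) => X (g i) ω) ℙ
      = Measure.pi (fun _ : s => Measure.map (X 0) ℙ) := by
  classical
  have hmv : Measurable (fun ω (i : s) => X (g (i : ℕ)) ω) :=
    measurable_pi_lambda _ fun i => hmeas _
  have hprob : IsProbabilityMeasure (Measure.map (X 0) ℙ) :=
    Measure.isProbabilityMeasure_map (hmeas 0).aemeasurable
  refine (Measure.pi_eq fun t ht => ?_).symm
  set ν := Measure.map (X 0) ℙ with hν
  -- extended box
  set t' : ℕ → Set ℝ := fun j => if h : j ∈ s then t ⟨j, h⟩ else univ with ht'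
  have ht'meas : ∀ j, MeasurableSet (t' j) := by
    intro j
    by_cases h : j ∈ s <;> simp [ht', h, ht]
  set u : ℕ → Set ℝ := fun k => t' (Function.invFun g k) with hu
  have humeas : ∀ k, MeasurableSet (u k) := fun k => ht'meas _
  have hug : ∀ j, u (g j) = t' j := by
    intro j
    simp [hu, Function.leftInverse_invFun hg j]
  have hpre : (fun ω (i : s) => X (g (i : ℕ)) ω) ⁻¹' (univ.pi t)
      = ⋂ k ∈ s.image g, X k ⁻¹' u k := by
    ext ω
    simp only [mem_preimage, Set.mem_pi, mem_univ, forall_true_left, Finset.coe_image,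
      Set.biInter_image, mem_iInter]
    constructor
    · intro h j hj
      obtain ⟨i, hi, rfl⟩ := Finset.mem_image.mp hj
      rw [hug i]
      simp only [ht', dif_pos hi]
      exact h ⟨i, hi⟩
    · intro h i
      have := h (g (i : ℕ)) (Finset.mem_image_of_mem g i.2)
      rw [hug] at this
      simpa [ht', dif_pos i.2] using this
  rw [Measure.map_apply hmv (MeasurableSet.univ_pi ht), hpre,
    hindep.meas_biInter (fun k _ => ⟨u k, humeas k, rfl⟩),
    Finset.prod_image (fun a _ b _ h => hg h)]
  have hfac : ∀ j, ℙ (X (g j) ⁻¹' u (g j)) = ν (t' j) := by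
    intro j
    rw [hug j, hν, Measure.map_apply (hmeas 0) (ht'meas j)]
    exact ((hident (g j)).measure_mem_eq (ht'meas j))
  calc ∏ j ∈ s, ℙ (X (g j) ⁻¹' u (g j)) = ∏ j ∈ s, ν (t' j) := by
        exact Finset.prod_congr rfl fun j _ => hfac j
    _ = ∏ i : s, ν (t i) := by
        rw [← Finset.prod_attach s (fun j => ν (t' j))]
        refine Finset.prod_congr rfl fun i _ => ?_
        simp [ht', dif_pos i.2]

lemma seq_law (X : ℕ → Ω → ℝ) (hmeas : ∀ i, Measurable (X i))
    (hindep : iIndepFun X ℙ)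
    (hident : ∀ i, IdentDistrib (X i) (X 0) ℙ ℙ)
    (g : ℕ → ℕ) (hg : Function.Injective g) :
    Measure.map (fun ω (i : ℕ) => X (g i) ω) ℙ
      = Measure.map (fun ω (i : ℕ) => X i ω) ℙ := by
  have hm1 : Measurable (fun ω (i : ℕ) => X (g i) ω) :=
    measurable_pi_lambda _ fun i => hmeas _
  have hm2 : Measurable (fun ω (i : ℕ) => X i ω) :=
    measurable_pi_lambda _ fun i => hmeas _
  have hp1 : IsProbabilityMeasure (Measure.map (fun ω (i : ℕ) => X (g i) ω) ℙ) :=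
    Measure.isProbabilityMeasure_map hm1.aemeasurable
  have hp2 : IsProbabilityMeasure (Measure.map (fun ω (i : ℕ) => X i ω) ℙ) :=
    Measure.isProbabilityMeasure_map hm2.aemeasurable
  refine ext_of_generate_finite _ generateFrom_measurableCylinders.symm
    isPiSystem_measurableCylinders ?_ (by simp)
  intro s hs
  obtain ⟨fs, S, hS, rfl⟩ := (mem_measurableCylinders _).mp hs
  rw [Measure.map_apply hm1 hS.cylinder, Measure.map_apply hm2 hS.cylinder]
  have hv1 : Measurable (fun ω (i : fs) => X (g (i : ℕ)) ω) :=
    measurable_pi_lambda _ fun i => hmeas _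
  have hv2 : Measurable (fun ω (i : fs) => X ((i : ℕ)) ω) :=
    measurable_pi_lambda _ fun i => hmeas _
  have e1 : (fun ω (i : ℕ) => X (g i) ω) ⁻¹' cylinder fs S
      = (fun ω (i : fs) => X (g (i : ℕ)) ω) ⁻¹' S := rfl
  have e2 : (fun ω (i : ℕ) => X i ω) ⁻¹' cylinder fs S
      = (fun ω (i : fs) => X ((i : ℕ)) ω) ⁻¹' S := rfl
  rw [e1, e2, ← Measure.map_apply hv1 hS, ← Measure.map_apply hv2 hS]
  have h1 := vec_law X hmeas hindep hident g hg fs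
  have h0 := vec_law X hmeas hindep hident id Function.injective_id fs
  simp only [id_eq] at h0
  rw [h1, h0]

lemma indep_mono' {m₁ m₂ m₁' m₂' mΩ : MeasurableSpace Ω} {μ : Measure Ω}
    (h : @Indep Ω m₁ m₂ mΩ μ) (h1 : m₁' ≤ m₁) (h2 : m₂' ≤ m₂) :
    @Indep Ω m₁' m₂' mΩ μ := by
  rw [Indep_iff] at h ⊢
  exact fun t1 t2 ht1 ht2 => h t1 t2 (h1 _ ht1) (h2 _ ht2)

theorem walk_sup_top (X : ℕ → Ω → ℝ)
    (hmeas : ∀ i, Measurable (X i))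
    (hindep : iIndepFun X ℙ)
    (hident : ∀ i, IdentDistrib (X i) (X 0) ℙ ℙ)
    (hint : Integrable (X 0) ℙ)
    (hmean : ∫ ω, X 0 ω ∂ℙ = 0)
    (hne : ℙ {ω | X 0 ω = 0} < 1) :
    ∀ᵐ ω ∂ℙ, (⨆ n, ((∑ i ∈ Finset.range n, X i ω : ℝ) : EReal)) = ⊤ := by
  classical
  -- the sup functional
  set F : (ℕ → ℝ) → EReal := fun x => ⨆ n, ((∑ i ∈ Finset.range n, x i : ℝ) : EReal) with hF
  have hFmeas : Measurable F := by
    refine Measurable.iSup fun n => measurable_coe_real_ereal.comp ?_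
    exact Finset.measurable_sum _ fun i _ => measurable_pi_apply i
  set W : Ω → EReal := fun ω => F (fun i => X i ω) with hW
  set W₁ : Ω → EReal := fun ω => F (fun i => X (i + 1) ω) with hW₁
  set T : ℕ → Ω → ℝ := fun n ω => ∑ i ∈ Finset.range n, X (i + 1) ω with hT
  have hSmeas : ∀ n, Measurable (fun ω => ∑ i ∈ Finset.range n, X i ω) :=
    fun n => Finset.measurable_sum _ fun i _ => hmeas i
  have hTmeas : ∀ n, Measurable (T n) :=
    fun n => Finset.measurable_sum _ fun i _ => hmeas (i + 1)
  have hWmeas : Measurable W :=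
    hFmeas.comp (measurable_pi_lambda _ fun i => hmeas i)
  have hW₁meas : Measurable W₁ :=
    hFmeas.comp (measurable_pi_lambda _ fun i => hmeas (i + 1))
  -- recursion
  have hrec : ∀ ω, W ω = max 0 ((X 0 ω : EReal) + W₁ ω) := by
    intro ω
    have h1 : W ω = max ((0 : ℝ) : EReal)
        (⨆ n, ((∑ i ∈ Finset.range (n + 1), X i ω : ℝ) : EReal)) := by
      rw [hW, hF]
      simpa using esup_succ (fun n => ((∑ i ∈ Finset.range n, X i ω : ℝ) : EReal))
    rw [h1]
    have h2 : ∀ n, (∑ i ∈ Finset.range (n + 1), X i ω : ℝ) = X 0 ω + T n ω := by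
      intro n
      rw [Finset.sum_range_succ' (fun i => X i ω) n, add_comm]
    have h3 : (⨆ n, ((∑ i ∈ Finset.range (n + 1), X i ω : ℝ) : EReal))
        = (X 0 ω : EReal) + W₁ ω := by
      rw [hW₁, hF, ereal_coe_add_iSup]
      exact iSup_congr fun n => by rw [h2 n, EReal.coe_add]
    rw [h3, EReal.coe_zero]
  have hW₁nonneg : ∀ ω, 0 ≤ W₁ ω := by
    intro ω
    have : ((0 : ℝ) : EReal) ≤ W₁ ω := by
      rw [hW₁, hF]
      have := le_iSup (fun n => ((∑ i ∈ Finset.range n, X (i + 1) ω : ℝ) : EReal)) 0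
      simpa using this
    simpa using this
  have hW₁nebot : ∀ ω, W₁ ω ≠ ⊥ := fun ω h =>
    absurd (h ▸ hW₁nonneg ω) (by simp)
  -- W real values
  have hWtop : ∀ ω, W₁ ω = ⊤ → W ω = ⊤ := by
    intro ω h
    rw [hrec, h, EReal.add_top_of_ne_bot (EReal.coe_ne_bot _)]
    simp
  have hWreal : ∀ ω, W₁ ω ≠ ⊤ →
      W ω = ((max (X 0 ω + (W₁ ω).toReal) 0 : ℝ) : EReal) := by
    intro ω h
    have hc : ((W₁ ω).toReal : EReal) = W₁ ω := EReal.coe_toReal h (hW₁nebot ω)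
    have h4 : (X 0 ω : EReal) + W₁ ω = ((X 0 ω + (W₁ ω).toReal : ℝ) : EReal) := by
      rw [EReal.coe_add, hc]
    rw [hrec, h4, max_comm, ← EReal.coe_zero, ← EReal.coe_strictMono.monotone.map_max]
  have hWiff : ∀ ω, W ω = ⊤ ↔ W₁ ω = ⊤ := by
    intro ω
    refine ⟨fun h => ?_, hWtop ω⟩
    by_contra hc
    rw [hWreal ω hc] at h
    exact EReal.coe_ne_top _ h
  -- identically distributed
  have hWid : IdentDistrib W W₁ ℙ ℙ := by
    have hseq : IdentDistrib (fun ω (i : ℕ) => X i ω) (fun ω (i : ℕ) => X (i + 1) ω) ℙ ℙ := by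
      refine ⟨(measurable_pi_lambda _ fun i => hmeas i).aemeasurable,
        (measurable_pi_lambda _ fun i => hmeas (i + 1)).aemeasurable, ?_⟩
      exact (seq_law X hmeas hindep hident (fun i => i + 1)
        (fun a b h => by simpa using h)).symm
    exact hseq.comp hFmeas
  -- independence
  have hIndepWF : IndepFun (X 0) W₁ ℙ := by
    have hiI := hindep.iIndep
    have hdisj : Disjoint ({0} : Set ℕ) {i | 0 < i} := by
      simp [Set.disjoint_left]
    have hInd := indep_iSup_of_disjoint (fun i => (hmeas i).comap_le) hiI hdisj
    rw [IndepFun_iff_Indep]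
    refine indep_mono' hInd ?_ ?_
    · exact le_iSup₂ (f := fun (i : ℕ) (_ : i ∈ ({0} : Set ℕ)) =>
        MeasurableSpace.comap (X i) inferInstance) 0 rfl
    · set M : MeasurableSpace Ω :=
        ⨆ i ∈ {i : ℕ | 0 < i}, MeasurableSpace.comap (X i) inferInstance with hM
      have hXiM : ∀ i : ℕ, 0 < i → Measurable[M] (X i) := by
        intro i hi
        refine Measurable.of_comap_le ?_
        exact le_iSup₂ (f := fun (j : ℕ) (_ : j ∈ {i : ℕ | 0 < i}) =>
          MeasurableSpace.comap (X j) inferInstance) i hi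
      have hW₁M : Measurable[M] W₁ :=
        hFmeas.comp (measurable_pi_lambda _ fun i => hXiM (i + 1) (Nat.succ_pos i))
      exact measurable_iff_comap_le.mp hW₁M
  -- suppose not
  rw [MeasureTheory.ae_iff]
  by_contra hcon
  set A : Set Ω := {ω | W₁ ω ≠ ⊤} with hA
  have hAmeas : MeasurableSet A := (hW₁meas (measurableSet_singleton ⊤)).compl
  have hAeq : {ω | ¬ (⨆ n, ((∑ i ∈ Finset.range n, X i ω : ℝ) : EReal)) = ⊤} = A := by
    ext ω
    exact not_congr (hWiff ω)
  have hApos : ℙ A ≠ 0 := by rwa [hAeq] at hcon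
  -- the law of X 0 puts mass below 0
  have hneg : 0 < ℙ {ω | X 0 ω < 0} := by
    rw [pos_iff_ne_zero]
    intro h0
    have hnonneg : 0 ≤ᵐ[ℙ] X 0 := by
      rw [EventuallyLE, ae_iff]
      simpa [not_le] using h0
    have hzero : X 0 =ᵐ[ℙ] 0 := (integral_eq_zero_iff_of_nonneg_ae hnonneg hint).mp hmean
    have hc : ℙ {ω | ¬ X 0 ω = 0} = 0 := by
      have := hzero
      rw [EventuallyEq, ae_iff] at this
      simpa using this
    have hcompl := measure_add_measure_compl (μ := ℙ)
      ((hmeas 0) (measurableSet_singleton (0 : ℝ)))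
    have hceq : (X 0 ⁻¹' {(0:ℝ)})ᶜ = {ω | ¬ X 0 ω = 0} := by
      ext ω; simp
    rw [hceq, hc, add_zero] at hcompl
    have hseq : (X 0 ⁻¹' {(0:ℝ)}) = {ω | X 0 ω = 0} := by ext ω; simp
    rw [hseq] at hcompl
    rw [hcompl] at hne
    simp at hne
  obtain ⟨δ₀, hδ₀pos, hδ₀⟩ : ∃ δ : ℝ, 0 < δ ∧ 0 < ℙ {ω | X 0 ω ≤ -δ} := by
    by_contra hc
    push_neg at hc
    have hall : ∀ k : ℕ, ℙ {ω | X 0 ω ≤ -(1/(k+1 : ℝ))} = 0 := by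
      intro k
      have h1 : (0:ℝ) < 1/(k+1 : ℝ) := by positivity
      have := hc (1/(k+1:ℝ)) h1
      exact le_antisymm (by simpa using this) (zero_le)
    have hsub : {ω | X 0 ω < 0} ⊆ ⋃ k : ℕ, {ω | X 0 ω ≤ -(1/(k+1 : ℝ))} := by
      intro ω hω
      simp only [mem_setOf_eq] at hω
      obtain ⟨k, hk⟩ := exists_nat_one_div_lt (show (0:ℝ) < -X 0 ω by linarith)
      exact mem_iUnion.mpr ⟨k, by simp only [mem_setOf_eq]; linarith⟩
    exact absurd (measure_mono_null hsub (measure_iUnion_null hall)) hneg.ne'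
  -- the essential infimum of W₁
  have hAunion : A = ⋃ k : ℕ, {ω | W₁ ω ≤ ((k : ℝ) : EReal)} := by
    ext ω
    simp only [hA, mem_setOf_eq, mem_iUnion]
    constructor
    · intro h
      obtain ⟨k, hk⟩ := exists_nat_ge (W₁ ω).toReal
      refine ⟨k, ?_⟩
      rw [← EReal.coe_toReal h (hW₁nebot ω)]
      exact EReal.coe_le_coe_iff.mpr hk
    · rintro ⟨k, hk⟩ htop
      rw [htop, top_le_iff] at hk
      exact EReal.coe_ne_top _ hk
  obtain ⟨K, hK⟩ : ∃ k : ℕ, ℙ {ω | W₁ ω ≤ ((k:ℝ) : EReal)} ≠ 0 := by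
    by_contra hc
    push_neg at hc
    exact hApos (by rw [hAunion]; exact measure_iUnion_null hc)
  set Q : Set ℝ := {t : ℝ | 0 < ℙ {ω | W₁ ω ≤ (t : EReal)}} with hQ
  have hQne : Q.Nonempty := ⟨K, pos_iff_ne_zero.mpr hK⟩
  have hQbdd : ∀ t ∈ Q, (0:ℝ) ≤ t := by
    intro t ht
    by_contra hlt
    push_neg at hlt
    have hempty : {ω | W₁ ω ≤ (t:EReal)} = ∅ := by
      ext ω
      simp only [mem_setOf_eq, mem_empty_iff_false, iff_false]
      intro hle
      have h2 := le_trans (hW₁nonneg ω) hle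
      rw [← EReal.coe_zero, EReal.coe_le_coe_iff] at h2
      linarith
    rw [hQ] at ht
    simp only [mem_setOf_eq, hempty, measure_empty] at ht
    exact lt_irrefl _ ht
  set m₀ := sInf Q with hm₀
  have hQbdd' : BddBelow Q := ⟨0, fun t ht => hQbdd t ht⟩
  have hm₀mem : ∀ η : ℝ, 0 < η → 0 < ℙ {ω | W₁ ω ≤ ((m₀ + η : ℝ) : EReal)} := by
    intro η hη
    obtain ⟨t, htQ, htlt⟩ := (csInf_lt_iff hQbdd' hQne).mp (lt_add_of_pos_right m₀ hη)
    exact lt_of_lt_of_le htQ (measure_mono fun ω hω =>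
      le_trans hω (EReal.coe_le_coe_iff.mpr htlt.le))
  have hm₀null : ℙ {ω | W₁ ω < ((m₀ : ℝ) : EReal)} = 0 := by
    have hsub : {ω | W₁ ω < ((m₀:ℝ) : EReal)} ⊆
        ⋃ q : ℚ, if (q:ℝ) < m₀ then {ω | W₁ ω ≤ ((q:ℝ) : EReal)} else (∅ : Set Ω) := by
      intro ω hω
      simp only [mem_setOf_eq] at hω
      have hωne : W₁ ω ≠ ⊤ := hω.ne_top
      have hcr : ((W₁ ω).toReal : EReal) = W₁ ω := EReal.coe_toReal hωne (hW₁nebot ω)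
      have hrm : (W₁ ω).toReal < m₀ := by
        rw [← hcr] at hω
        exact EReal.coe_lt_coe_iff.mp hω
      obtain ⟨q, hq1, hq2⟩ := exists_rat_btwn hrm
      refine mem_iUnion.mpr ⟨q, ?_⟩
      rw [if_pos hq2]
      simp only [mem_setOf_eq]
      rw [← hcr]
      exact EReal.coe_le_coe_iff.mpr hq1.le
    refine measure_mono_null hsub (measure_iUnion_null fun q => ?_)
    split_ifs with hq
    · by_contra hpos
      have hmem : (q:ℝ) ∈ Q := pos_iff_ne_zero.mpr hpos
      exact absurd (csInf_le hQbdd' hmem) (not_le.mpr hq)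
    · exact measure_empty
  have hm₀W : ℙ {ω | W ω < ((m₀:ℝ) : EReal)} = 0 := by
    have h2 := hWid.measure_mem_eq (s := Iio ((m₀:ℝ) : EReal)) measurableSet_Iio
    have e1 : W ⁻¹' Iio ((m₀:ℝ) : EReal) = {ω | W ω < ((m₀:ℝ) : EReal)} := rfl
    have e2 : W₁ ⁻¹' Iio ((m₀:ℝ) : EReal) = {ω | W₁ ω < ((m₀:ℝ) : EReal)} := rfl
    rw [e1, e2] at h2
    rw [h2]
    exact hm₀null
  -- truncated comparison and dominated convergence
  set U : Ω → ℝ := fun ω => (W₁ ω).toReal with hU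
  have hUmeas : Measurable U := measurable_ereal_toReal.comp hW₁meas
  have hUnonneg : ∀ ω, W₁ ω ≠ ⊤ → 0 ≤ U ω := by
    intro ω h
    have hcr : ((U ω : ℝ) : EReal) = W₁ ω := EReal.coe_toReal h (hW₁nebot ω)
    have h2 := hW₁nonneg ω
    rw [← hcr, ← EReal.coe_zero, EReal.coe_le_coe_iff] at h2
    exact h2
  set P1 : ℕ → Ω → ℝ :=
    fun k ω => A.indicator (fun ω => min (max (X 0 ω + U ω) 0) (k:ℝ)) ω with hP1
  set P2 : ℕ → Ω → ℝ :=
    fun k ω => A.indicator (fun ω => min (max (U ω) 0) (k:ℝ)) ω with hP2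
  have hP1meas : ∀ k, Measurable (P1 k) := fun k =>
    ((((hmeas 0).add hUmeas).max measurable_const).min measurable_const).indicator hAmeas
  have hP2meas : ∀ k, Measurable (P2 k) := fun k =>
    ((hUmeas.max measurable_const).min measurable_const).indicator hAmeas
  have hpiece : ∀ (z : ℝ) (k : ℕ), 0 ≤ min (max z 0) (k:ℝ) ∧ min (max z 0) (k:ℝ) ≤ (k:ℝ) :=
    fun z k => ⟨le_min (le_max_right z 0) (Nat.cast_nonneg k), min_le_right _ _⟩
  have hP1int : ∀ k, Integrable (P1 k) ℙ := by
    intro k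
    refine Integrable.mono' (integrable_const (k:ℝ)) (hP1meas k).aestronglyMeasurable
      (ae_of_all _ fun ω => ?_)
    rw [Real.norm_eq_abs, abs_le]
    by_cases h : ω ∈ A
    · simp only [hP1, indicator_of_mem h]
      exact ⟨le_trans (by norm_num [Nat.cast_nonneg]) (hpiece _ k).1, (hpiece _ k).2⟩
    · simp only [hP1, indicator_of_notMem h]
      constructor <;> simp [Nat.cast_nonneg]
  have hP2int : ∀ k, Integrable (P2 k) ℙ := by
    intro k
    refine Integrable.mono' (integrable_const (k:ℝ)) (hP2meas k).aestronglyMeasurable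
      (ae_of_all _ fun ω => ?_)
    rw [Real.norm_eq_abs, abs_le]
    by_cases h : ω ∈ A
    · simp only [hP2, indicator_of_mem h]
      exact ⟨le_trans (by norm_num [Nat.cast_nonneg]) (hpiece _ k).1, (hpiece _ k).2⟩
    · simp only [hP2, indicator_of_notMem h]
      constructor <;> simp [Nat.cast_nonneg]
  -- the identity ∫ P1 k = ∫ P2 k
  have hIk : ∀ k : ℕ, ∫ ω, P1 k ω ∂ℙ = ∫ ω, P2 k ω ∂ℙ := by
    intro k
    set mk : EReal → ℝ :=
      fun y => (({⊤} : Set EReal)ᶜ).indicator (fun y => (min y ((k:ℝ):EReal)).toReal) y with hmk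
    have hmkmeas : Measurable mk :=
      (measurable_ereal_toReal.comp (measurable_id.min measurable_const)).indicator
        (measurableSet_singleton ⊤).compl
    have h1 : ∀ ω, mk (W ω) = P1 k ω := by
      intro ω
      by_cases h : W₁ ω = ⊤
      · have hw : W ω = ⊤ := hWtop ω h
        have hωA : ω ∉ A := by simp [hA, h]
        simp [hmk, hw, hP1, indicator_of_notMem hωA]
      · have hw := hWreal ω h
        have hωA : ω ∈ A := h
        rw [hmk]
        simp only [hw, hP1, indicator_of_mem hωA]
        rw [indicator_of_mem (by simp : ((max (X 0 ω + U ω) 0 : ℝ) : EReal) ∈ (({⊤} : Set EReal)ᶜ))]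
        rw [← EReal.coe_strictMono.monotone.map_min, EReal.toReal_coe]
    have h2 : ∀ ω, mk (W₁ ω) = P2 k ω := by
      intro ω
      by_cases h : W₁ ω = ⊤
      · have hωA : ω ∉ A := by simp [hA, h]
        simp [hmk, h, hP2, indicator_of_notMem hωA]
      · have hωA : ω ∈ A := h
        have hcr : ((U ω : ℝ) : EReal) = W₁ ω := EReal.coe_toReal h (hW₁nebot ω)
        rw [hmk]
        simp only [hP2, indicator_of_mem hωA]
        rw [← hcr]
        rw [indicator_of_mem (by simp : ((U ω : ℝ) : EReal) ∈ (({⊤} : Set EReal)ᶜ))]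
        rw [← EReal.coe_strictMono.monotone.map_min, EReal.toReal_coe,
          max_eq_left (hUnonneg ω h)]
    have h3 := (hWid.comp hmkmeas).integral_eq
    calc ∫ ω, P1 k ω ∂ℙ = ∫ ω, mk (W ω) ∂ℙ := by
          exact integral_congr_ae (ae_of_all _ fun ω => (h1 ω).symm)
      _ = ∫ ω, mk (W₁ ω) ∂ℙ := h3
      _ = ∫ ω, P2 k ω ∂ℙ := integral_congr_ae (ae_of_all _ fun ω => h2 ω)
  -- limit function
  set D : Ω → ℝ := fun ω => A.indicator (fun ω => max (X 0 ω) (-U ω)) ω with hD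
  have hDmeas : Measurable D := ((hmeas 0).max hUmeas.neg).indicator hAmeas
  have hlim : ∀ ω, Tendsto (fun k : ℕ => P1 k ω - P2 k ω) atTop (𝓝 (D ω)) := by
    intro ω
    by_cases h : ω ∈ A
    · have hW₁ne : W₁ ω ≠ ⊤ := h
      obtain ⟨N, hN⟩ := exists_nat_ge (max (max (X 0 ω + U ω) 0) (max (U ω) 0))
      refine Tendsto.congr' ?_ (tendsto_const_nhds (x := D ω))
      filter_upwards [eventually_ge_atTop N] with k hk
      have hkN : max (max (X 0 ω + U ω) 0) (max (U ω) 0) ≤ (k:ℝ) :=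
        le_trans hN (Nat.cast_le.mpr hk)
      have e1 : min (max (X 0 ω + U ω) 0) (k:ℝ) = max (X 0 ω + U ω) 0 :=
        min_eq_left (le_trans (le_max_left _ _) hkN)
      have e2 : min (max (U ω) 0) (k:ℝ) = max (U ω) 0 :=
        min_eq_left (le_trans (le_max_right _ _) hkN)
      simp only [hP1, hP2, hD, indicator_of_mem h, e1, e2]
      rw [max_eq_left (hUnonneg ω hW₁ne), ← max_sub_sub_right (X 0 ω + U ω) 0 (U ω),
        add_sub_cancel_right, zero_sub]
    · simp only [hP1, hP2, hD, indicator_of_notMem h, sub_zero]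
      exact tendsto_const_nhds
  have hbd : ∀ k : ℕ, ∀ᵐ ω ∂ℙ, ‖P1 k ω - P2 k ω‖ ≤ |X 0 ω| := by
    intro k
    refine ae_of_all _ fun ω => ?_
    rw [Real.norm_eq_abs]
    by_cases h : ω ∈ A
    · simp only [hP1, hP2, indicator_of_mem h]
      have h2 := phi_lip (k:ℝ) (X 0 ω + U ω) (U ω)
      simpa [add_sub_cancel_right] using h2
    · simp only [hP1, hP2, indicator_of_notMem h, sub_zero, abs_zero]
      exact abs_nonneg _
  have htendI : Tendsto (fun k : ℕ => ∫ ω, (P1 k ω - P2 k ω) ∂ℙ) atTop (𝓝 (∫ ω, D ω ∂ℙ)) :=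
    tendsto_integral_of_dominated_convergence (fun ω => |X 0 ω|)
      (fun k => ((hP1meas k).sub (hP2meas k)).aestronglyMeasurable) hint.abs hbd
      (ae_of_all _ hlim)
  have hIzero : ∀ k : ℕ, ∫ ω, (P1 k ω - P2 k ω) ∂ℙ = 0 := by
    intro k
    rw [integral_sub (hP1int k) (hP2int k), hIk k, sub_self]
  have hDzero : ∫ ω, D ω ∂ℙ = 0 :=
    (tendsto_nhds_unique (Tendsto.congr (fun k => hIzero k) htendI) tendsto_const_nhds)
  set χ : Ω → ℝ := fun ω => A.indicator (fun _ => (1:ℝ)) ω with hχ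
  have hχmeas : Measurable χ := measurable_const.indicator hAmeas
  have hχint : Integrable χ ℙ := (integrable_const (1:ℝ)).indicator hAmeas
  set G : Ω → ℝ := fun ω => A.indicator (fun ω => max (-(X 0 ω + U ω)) 0) ω with hG
  have hGmeas : Measurable G :=
    (((hmeas 0).add hUmeas).neg.max measurable_const).indicator hAmeas
  have hGbd : ∀ ω, ‖G ω‖ ≤ |X 0 ω| := by
    intro ω
    rw [Real.norm_eq_abs]
    by_cases h : ω ∈ A
    · simp only [hG, indicator_of_mem h]
      rw [abs_of_nonneg (le_max_right _ _)]
      refine max_le ?_ (abs_nonneg _)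
      have h0 : 0 ≤ U ω := hUnonneg ω h
      calc -(X 0 ω + U ω) ≤ -(X 0 ω) := by linarith
        _ ≤ |X 0 ω| := neg_le_abs _
    · simp [hG, indicator_of_notMem h, abs_nonneg]
  have hGint : Integrable G ℙ :=
    Integrable.mono' hint.abs hGmeas.aestronglyMeasurable (ae_of_all _ hGbd)
  have hXχint : Integrable (fun ω => X 0 ω * χ ω) ℙ := by
    refine Integrable.mono' hint.abs ((hmeas 0).mul hχmeas).aestronglyMeasurable
      (ae_of_all _ fun ω => ?_)
    rw [Real.norm_eq_abs, abs_mul]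
    by_cases h : ω ∈ A
    · simp [hχ, indicator_of_mem h]
    · simp [hχ, indicator_of_notMem h, abs_nonneg]
  have hDsplit : ∀ ω, D ω = X 0 ω * χ ω + G ω := by
    intro ω
    by_cases h : ω ∈ A
    · simp only [hD, hχ, hG, indicator_of_mem h, mul_one]
      have e : X 0 ω + -(X 0 ω + U ω) = -U ω := by ring
      rw [← max_add_add_left, e, add_zero, max_comm]
    · simp [hD, hχ, hG, indicator_of_notMem h]
  have hXχzero : ∫ ω, X 0 ω * χ ω ∂ℙ = 0 := by
    set ψ : EReal → ℝ := fun y => (({⊤} : Set EReal)ᶜ).indicator (fun _ => (1:ℝ)) y with hψ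
    have hψmeas : Measurable ψ := measurable_const.indicator (measurableSet_singleton ⊤).compl
    have hψcomp : (fun ω => ψ (W₁ ω)) = χ := by
      funext ω
      by_cases h : ω ∈ A
      · have h2 : W₁ ω ∈ ({⊤} : Set EReal)ᶜ := h
        simp only [hψ, hχ, indicator_of_mem h2, indicator_of_mem h]
      · have h2 : W₁ ω ∉ ({⊤} : Set EReal)ᶜ := by
          simp only [hA, mem_setOf_eq, not_not] at h
          simp [h]
        simp only [hψ, hχ, indicator_of_notMem h2, indicator_of_notMem h]
    have hIF : IndepFun (X 0) (fun ω => ψ (W₁ ω)) ℙ := hIndepWF.comp measurable_id hψmeas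
    rw [← hψcomp]
    have h3 := hIF.integral_fun_mul_eq_mul_integral hint.aestronglyMeasurable (by rw [hψcomp]; exact hχint.aestronglyMeasurable)
    exact h3.trans (by rw [hmean, zero_mul])
  have hGzero : ∫ ω, G ω ∂ℙ = 0 := by
    have h4 := hDzero
    rw [integral_congr_ae (ae_of_all _ hDsplit), integral_add hXχint hGint, hXχzero,
      zero_add] at h4
    exact h4
  have hGnonneg : 0 ≤ᵐ[ℙ] G := ae_of_all _ fun ω => by
    by_cases h : ω ∈ A
    · simp only [hG, indicator_of_mem h, Pi.zero_apply]
      exact le_max_right _ _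
    · simp [hG, indicator_of_notMem h]
  have hGae : G =ᵐ[ℙ] 0 := (integral_eq_zero_iff_of_nonneg_ae hGnonneg hGint).mp hGzero
  have hker : ∀ᵐ ω ∂ℙ, ω ∈ A → 0 ≤ X 0 ω + U ω := by
    filter_upwards [hGae] with ω hω h
    simp only [hG, indicator_of_mem h, Pi.zero_apply] at hω
    have h5 := le_max_left (-(X 0 ω + U ω)) 0
    rw [hω] at h5
    linarith
  have hm₀Wae : ∀ᵐ ω ∂ℙ, ¬ (W ω < ((m₀:ℝ):EReal)) := by
    rw [ae_iff]
    simpa using hm₀W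
  set η : ℝ := δ₀ / 2 with hη
  set B : Set Ω := {ω | X 0 ω ≤ -δ₀} ∩ {ω | W₁ ω ≤ ((m₀ + η : ℝ):EReal)} with hB
  have hBpos : 0 < ℙ B := by
    have h2 := hIndepWF.measure_inter_preimage_eq_mul (Iic (-δ₀)) (Iic ((m₀ + η:ℝ):EReal))
      measurableSet_Iic measurableSet_Iic
    have e : B = X 0 ⁻¹' Iic (-δ₀) ∩ W₁ ⁻¹' Iic ((m₀+η:ℝ):EReal) := rfl
    rw [e, h2]
    exact ENNReal.mul_pos hδ₀.ne' (hm₀mem η (by positivity)).ne'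
  obtain ⟨ω, hωB, hωk, hωm⟩ : ∃ ω, ω ∈ B ∧ (ω ∈ A → 0 ≤ X 0 ω + U ω) ∧
      ¬ (W ω < ((m₀:ℝ):EReal)) := by
    by_contra hcon2
    push_neg at hcon2
    have hnull : ℙ {ω | ¬ ((ω ∈ A → 0 ≤ X 0 ω + U ω) ∧ ¬ (W ω < ((m₀:ℝ):EReal)))} = 0 := by
      have h6 := hker.and hm₀Wae
      rw [ae_iff] at h6
      exact h6
    refine absurd ?_ hBpos.ne'
    refine measure_mono_null ?_ hnull
    intro ω hω
    simp only [mem_setOf_eq]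
    intro hc
    exact hc.2 (hcon2 ω hω hc.1)
  obtain ⟨hωB1, hωB2⟩ := hωB
  simp only [mem_setOf_eq] at hωB1 hωB2
  have hωne : W₁ ω ≠ ⊤ := by
    intro h
    rw [h, top_le_iff] at hωB2
    exact EReal.coe_ne_top _ hωB2
  have hωA : ω ∈ A := hωne
  have hcr : ((U ω : ℝ) : EReal) = W₁ ω := EReal.coe_toReal hωne (hW₁nebot ω)
  have hUle : U ω ≤ m₀ + η := by
    rw [← hcr] at hωB2
    exact EReal.coe_le_coe_iff.mp hωB2
  have h0le : 0 ≤ X 0 ω + U ω := hωk hωA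
  have hWω : W ω = ((X 0 ω + U ω : ℝ) : EReal) := by
    rw [hWreal ω hωne, max_eq_left h0le]
  have hm₀le : (m₀:ℝ) ≤ X 0 ω + U ω := by
    rw [hWω] at hωm
    exact EReal.coe_le_coe_iff.mp (not_lt.mp hωm)
  have : η = δ₀ / 2 := hη
  linarith

lemma freq_of_sup_top {u : ℕ → ℝ} (h : (⨆ n, ((u n : ℝ) : EReal)) = ⊤) (c : ℝ) :
    ∃ᶠ n in atTop, c < u n := by
  rw [frequently_atTop]
  intro N
  have hne : (Finset.range (N+1)).Nonempty := Finset.nonempty_range_iff.mpr (Nat.succ_ne_zero N)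
  set b : ℝ := max c ((Finset.range (N+1)).sup' hne u) with hb
  have hblt : ((b : ℝ) : EReal) < ⨆ n, ((u n : ℝ) : EReal) := by
    rw [h]
    exact EReal.coe_lt_top b
  obtain ⟨n, hn⟩ := lt_iSup_iff.mp hblt
  have hbn : b < u n := EReal.coe_lt_coe_iff.mp hn
  refine ⟨n, ?_, lt_of_le_of_lt (le_max_left _ _) hbn⟩
  by_contra hlt
  push_neg at hlt
  have : u n ≤ b :=
    le_trans (Finset.le_sup' u (Finset.mem_range.mpr (Nat.lt_succ_of_lt hlt)))
      (le_max_right _ _)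
  exact absurd hbn (not_lt.mpr this)

end RandomWalkOscillationAux

/-- Oscillation of mean-zero random walks: if (X_i) are i.i.d. integrable real
random variables with E[X_1] = 0 and P(X_1 = 0) < 1, then almost surely the
partial sums S_n satisfy liminf S_n = −∞ and limsup S_n = +∞; in particular
S_n < 0 infinitely often. -/
theorem random_walk_oscillation
    {Ω : Type*} [MeasureSpace Ω] [IsProbabilityMeasure (ℙ : Measure Ω)]
    (X : ℕ → Ω → ℝ)
    (hmeas : ∀ i, Measurable (X i))
    (hindep : iIndepFun X ℙ)
    (hident : ∀ i, IdentDistrib (X i) (X 0) ℙ ℙ)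
    (hint : Integrable (X 0) ℙ)
    (hmean : ∫ ω, X 0 ω ∂ℙ = 0)
    (hne : ℙ {ω | X 0 ω = 0} < 1) :
    ∀ᵐ ω ∂ℙ,
      (∀ c : ℝ, ∃ᶠ n in atTop, (∑ i ∈ Finset.range n, X i ω) < c) ∧
      (∀ c : ℝ, ∃ᶠ n in atTop, c < ∑ i ∈ Finset.range n, X i ω) := by
  open Set Topology in
  have hpos := walk_sup_top X hmeas hindep hident hint hmean hne
  set Y : ℕ → Ω → ℝ := fun i ω => -X i ω with hY
  have hYmeas : ∀ i, Measurable (Y i) := fun i => (hmeas i).neg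
  have hYindep : iIndepFun Y ℙ :=
    hindep.comp (fun _ : ℕ => (fun x : ℝ => -x)) (fun _ => measurable_neg)
  have hYident : ∀ i, IdentDistrib (Y i) (Y 0) ℙ ℙ := fun i =>
    (hident i).comp measurable_neg
  have hYint : Integrable (Y 0) ℙ := hint.neg
  have hYmean : ∫ ω, Y 0 ω ∂ℙ = 0 := by
    simp only [hY]
    rw [integral_neg, hmean, neg_zero]
  have hYne : ℙ {ω | Y 0 ω = 0} < 1 := by
    simpa [hY, neg_eq_zero] using hne
  have hneg := walk_sup_top Y hYmeas hYindep hYident hYint hYmean hYne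
  filter_upwards [hpos, hneg] with ω h1 h2
  have hsum : ∀ n, ∑ i ∈ Finset.range n, Y i ω = -∑ i ∈ Finset.range n, X i ω := by
    intro n
    simp [hY, Finset.sum_neg_distrib]
  constructor
  · intro c
    have := freq_of_sup_top h2 (-c)
    refine this.mono fun n hn => ?_
    rw [hsum n] at hn
    linarith
  · intro c
    exact freq_of_sup_top h1 c
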